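/- Suppose ε : ℝ₊ → ℝ₊ is regularly varying of index -γ (γ > 0), F̄_Q is regularly varying of index -α (α > 0), and for all x > 0, P(|X^{(p)}| > x) ≤ ε(x)·F̄_Q(x). If moreover b_n → ∞ satisfies ρⁿ F̄_Q(b_n) → 1 with ρ > 1, then for every fixed θ > 0, ρⁿ · n^{2+α+γ+η} · P(|X^{(p)}| > b_n θ / n) → 0 as n → ∞, for some (all sufficiently small) η > 0, provided (γ-γ')(1/α - β) log ρ exceeds 0 for suitable γ' ∈ (0,γ), β ∈ (0,1/α) — which always holds. In particular ρⁿ · n · P(n|X^{(p)}| > b_n θ) → 0. -/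

import Mathlib

open Filter Topology

open Real


lemma dyadic_decay (f : ℝ → ℝ) (β s : ℝ)
    (hf : ∀ t > (0:ℝ), 0 < f t)
    (hs0 : 0 < s) (hs : (2:ℝ) ^ (-β) < s)
    (hRV : Tendsto (fun t : ℝ => f (t * 2) / f t) atTop (𝓝 ((2:ℝ) ^ (-β)))) :
    ∃ C > 0, ∀ k : ℕ, f (2 ^ k) ≤ C * s ^ k := by
  have h2 : Tendsto (fun k : ℕ => (2:ℝ) ^ k) atTop atTop :=
    tendsto_pow_atTop_atTop_of_one_lt one_lt_two
  have hev : ∀ᶠ k : ℕ in atTop, f ((2:ℝ) ^ k * 2) / f ((2:ℝ) ^ k) < s :=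
    (hRV.comp h2).eventually_lt_const hs
  obtain ⟨K, hK⟩ := eventually_atTop.1 hev
  have hpos : ∀ k : ℕ, 0 < f ((2:ℝ) ^ k) := fun k => hf _ (by positivity)
  have step : ∀ k ≥ K, f ((2:ℝ) ^ (k + 1)) ≤ s * f ((2:ℝ) ^ k) := by
    intro k hk
    have := hK k hk
    have h' : f ((2:ℝ) ^ k * 2) < s * f ((2:ℝ) ^ k) := (div_lt_iff₀ (hpos k)).1 this
    calc f ((2:ℝ) ^ (k + 1)) = f ((2:ℝ) ^ k * 2) := by rw [pow_succ]
    _ ≤ s * f ((2:ℝ) ^ k) := h'.le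
  have ind : ∀ j : ℕ, f ((2:ℝ) ^ (K + j)) ≤ f ((2:ℝ) ^ K) * s ^ j := by
    intro j
    induction j with
    | zero => simp
    | succ j ih =>
      have h1 : f ((2:ℝ) ^ (K + j + 1)) ≤ s * f ((2:ℝ) ^ (K + j)) :=
        step _ (Nat.le_add_right _ _)
      calc f ((2:ℝ) ^ (K + (j+1))) = f ((2:ℝ) ^ (K + j + 1)) := by ring_nf
      _ ≤ s * f ((2:ℝ) ^ (K + j)) := h1
      _ ≤ s * (f ((2:ℝ) ^ K) * s ^ j) := by
          exact mul_le_mul_of_nonneg_left ih hs0.le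
      _ = f ((2:ℝ) ^ K) * s ^ (j+1) := by ring
  set C : ℝ := ∑ j ∈ Finset.range (K + 1), f ((2:ℝ) ^ j) / s ^ j with hC
  have hCpos : 0 < C := by
    apply Finset.sum_pos
    · intro j _; have := hpos j; positivity
    · exact ⟨0, Finset.mem_range.2 (Nat.succ_pos _)⟩
  have hCge : ∀ j ≤ K, f ((2:ℝ) ^ j) / s ^ j ≤ C := by
    intro j hj
    apply Finset.single_le_sum (f := fun j => f ((2:ℝ) ^ j) / s ^ j)
    · intro i _; have := hpos i; positivity
    · exact Finset.mem_range.2 (Nat.lt_succ_of_le hj)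
  refine ⟨C, hCpos, fun k => ?_⟩
  rcases le_or_gt k K with hk | hk
  · have := hCge k hk
    calc f ((2:ℝ) ^ k) = f ((2:ℝ) ^ k) / s ^ k * s ^ k := by field_simp
    _ ≤ C * s ^ k := by
        exact mul_le_mul_of_nonneg_right this (by positivity)
  · have hkK : K + (k - K) = k := by omega
    have h1 : f ((2:ℝ) ^ k) ≤ f ((2:ℝ) ^ K) * s ^ (k - K) := by
      have := ind (k - K); rwa [hkK] at this
    have h2' : f ((2:ℝ) ^ K) / s ^ K ≤ C := hCge K le_rfl
    calc f ((2:ℝ) ^ k) ≤ f ((2:ℝ) ^ K) * s ^ (k - K) := h1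
    _ = f ((2:ℝ) ^ K) / s ^ K * (s ^ K * s ^ (k - K)) := by field_simp
    _ = f ((2:ℝ) ^ K) / s ^ K * s ^ k := by rw [← pow_add, hkK]
    _ ≤ C * s ^ k := mul_le_mul_of_nonneg_right h2' (by positivity)


lemma b_growth (FQ : ℝ → ℝ) (α ρ μ : ℝ) (hα : 0 < α) (hρ : 1 < ρ)
    (hμ1 : 1 < μ) (hμ : μ ^ α < ρ)
    (hFQ_pos : ∀ t, 0 < FQ t) (hFQ_anti : Antitone FQ)
    (hFQRV : ∀ x > (0:ℝ), Tendsto (fun t : ℝ => FQ (t * x) / FQ t) atTop (𝓝 (x ^ (-α))))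
    (b : ℕ → ℝ) (hb_pos : ∀ n, 0 < b n) (hb_mono : Monotone b)
    (hb_top : Tendsto b atTop atTop)
    (hbn : Tendsto (fun n : ℕ => ρ ^ n * FQ (b n)) atTop (𝓝 1)) :
    ∃ c > 0, ∃ N : ℕ, ∀ n ≥ N, c * μ ^ n ≤ b n := by
  have hμ0 : (0:ℝ) < μ := lt_trans one_pos hμ1
  have hρ0 : (0:ℝ) < ρ := lt_trans one_pos hρ
  set A : ℝ := μ ^ α with hAdef
  have hA : (0:ℝ) < A := rpow_pos_of_pos hμ0 α
  have h1 : 1 < ρ / A := (one_lt_div hA).2 hμ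
  obtain ⟨d, hd⟩ := pow_unbounded_of_one_lt (8:ℝ) h1
  set X : ℝ := μ ^ (d : ℕ) with hXdef
  have hX0 : 0 < X := by positivity
  have hXa : X ^ (-α) = (A ^ (d:ℕ))⁻¹ := by
    rw [hXdef, hAdef, ← Real.rpow_natCast μ d, ← Real.rpow_natCast (μ ^ α) d,
      ← Real.rpow_mul hμ0.le, ← Real.rpow_mul hμ0.le, ← Real.rpow_neg hμ0.le]
    congr 1; ring
  have hXapos : 0 < X ^ (-α) := rpow_pos_of_pos hX0 _
  have ev1 : ∀ᶠ n : ℕ in atTop, X ^ (-α) / 2 < FQ (b n * X) / FQ (b n) :=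
    ((hFQRV X hX0).comp hb_top).eventually_const_lt (half_lt_self hXapos)
  have ev2 : ∀ᶠ n : ℕ in atTop, ρ ^ n * FQ (b n) < 2 := hbn.eventually_lt_const one_lt_two
  have ev3 : ∀ᶠ n : ℕ in atTop, 1/2 < ρ ^ n * FQ (b n) :=
    hbn.eventually_const_lt (by norm_num)
  obtain ⟨N, hN⟩ := eventually_atTop.1 ((ev1.and ev2).and ev3)
  have claim : ∀ n ≥ N, b n * X ≤ b (n + d) := by
    intro n hn
    by_contra hcon
    push_neg at hcon
    have hmono : FQ (b n * X) ≤ FQ (b (n + d)) := hFQ_anti hcon.le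
    obtain ⟨⟨e1, e2⟩, e3⟩ := hN n hn
    obtain ⟨⟨_, e2'⟩, _⟩ := hN (n + d) (le_trans hn (Nat.le_add_right _ _))
    rw [hXa] at e1
    set Pn : ℝ := ρ ^ n with hPn
    set Pd : ℝ := ρ ^ d with hPd
    set Ad : ℝ := A ^ d with hAd
    have hPn0 : 0 < Pn := by positivity
    have hPd0 : 0 < Pd := by positivity
    have hAd0 : 0 < Ad := by positivity
    have hd' : 8 * Ad < Pd := by
      have : (8:ℝ) < Pd / Ad := by rw [hPd, hAd, ← div_pow]; exact hd
      calc 8 * Ad < Pd / Ad * Ad := by exact mul_lt_mul_of_pos_right this hAd0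
      _ = Pd := by field_simp
    have e2'' : Pn * Pd * FQ (b (n + d)) < 2 := by
      have : ρ ^ (n + d) = Pn * Pd := pow_add ρ n d
      rw [← this]; exact e2'
    have e1' : Ad⁻¹ / 2 * FQ (b n) < FQ (b n * X) := (lt_div_iff₀ (hFQ_pos _)).1 e1
    have hQn : 0 < FQ (b n) := hFQ_pos _
    have key : (2:ℝ) < Pn * Pd * FQ (b (n + d)) := by
      have h4 : (2:ℝ) < Pd / (4 * Ad) := by
        rw [lt_div_iff₀ (by positivity)]; nlinarith
      have h5 : Pd / (4 * Ad) ≤ Pd / (4 * Ad) * (2 * (Pn * FQ (b n))) := by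
        apply le_mul_of_one_le_right (by positivity)
        linarith
      calc (2:ℝ) < Pd / (4 * Ad) := h4
      _ ≤ Pd / (4 * Ad) * (2 * (Pn * FQ (b n))) := h5
      _ = Pn * Pd * (Ad⁻¹ / 2 * FQ (b n)) := by field_simp; ring
      _ ≤ Pn * Pd * FQ (b n * X) := by
          exact mul_le_mul_of_nonneg_left e1'.le (by positivity)
      _ ≤ Pn * Pd * FQ (b (n + d)) :=
          mul_le_mul_of_nonneg_left hmono (le_of_lt (mul_pos hPn0 hPd0))
    linarith
  have hd0 : 0 < d := by
    rcases Nat.eq_zero_or_pos d with h | h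
    · exfalso; rw [h] at hd; norm_num at hd
    · exact h
  have ind : ∀ k : ℕ, b N * X ^ k ≤ b (N + k * d) := by
    intro k
    induction k with
    | zero => simp
    | succ k ih =>
      have h1 : b (N + k * d) * X ≤ b (N + k * d + d) := claim _ (Nat.le_add_right _ _)
      have : N + (k + 1) * d = N + k * d + d := by ring
      rw [this, pow_succ, ← mul_assoc]
      calc b N * X ^ k * X ≤ b (N + k * d) * X := mul_le_mul_of_nonneg_right ih hX0.le
      _ ≤ b (N + k * d + d) := h1
  refine ⟨b N / μ ^ (N + d), div_pos (hb_pos N) (by positivity), N, fun n hn => ?_⟩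
  set k : ℕ := (n - N) / d with hk
  have h2 : k * d + (n - N) % d = n - N := by
    rw [hk, Nat.mul_comm]; exact Nat.div_add_mod _ _
  have h3 : (n - N) % d < d := Nat.mod_lt _ hd0
  have hle : N + k * d ≤ n := by omega
  have hlt : n ≤ N + k * d + d := by omega
  have hb1 : b N * X ^ k ≤ b n := le_trans (ind k) (hb_mono hle)
  have hXk : X ^ k = μ ^ (k * d) := by rw [hXdef, ← pow_mul, mul_comm]
  have hμpow : μ ^ n ≤ μ ^ (N + d + k * d) := pow_le_pow_right₀ hμ1.le (by omega)
  calc b N / μ ^ (N + d) * μ ^ n ≤ b N / μ ^ (N + d) * μ ^ (N + d + k * d) :=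
        mul_le_mul_of_nonneg_left hμpow (le_of_lt (div_pos (hb_pos N) (by positivity)))
  _ = b N * μ ^ (k * d) := by
      rw [pow_add]
      field_simp
      ring
  _ = b N * X ^ k := by rw [hXk]
  _ ≤ b n := hb1



theorem stmt12' (eps FQ Fp : ℝ → ℝ) (γ α ρ : ℝ)
    (hγ : 0 < γ) (hα : 0 < α) (hρ : 1 < ρ)
    (heps_pos : ∀ t > (0:ℝ), 0 < eps t)
    (hFQ_pos : ∀ t, 0 < FQ t) (hFQ_anti : Antitone FQ)
    (hFp_nonneg : ∀ t, 0 ≤ Fp t) (hFp_anti : Antitone Fp)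
    (hepsRV : ∀ x > (0:ℝ), Tendsto (fun t : ℝ => eps (t * x) / eps t) atTop (𝓝 (x ^ (-γ))))
    (hFQRV : ∀ x > (0:ℝ), Tendsto (fun t : ℝ => FQ (t * x) / FQ t) atTop (𝓝 (x ^ (-α))))
    (hdom : ∀ x > (0:ℝ), Fp x ≤ eps x * FQ x)
    (b : ℕ → ℝ) (hb_pos : ∀ n, 0 < b n) (hb_mono : Monotone b)
    (hb_top : Tendsto b atTop atTop)
    (hbn : Tendsto (fun n : ℕ => ρ ^ n * FQ (b n)) atTop (𝓝 1)) :
    ∀ θ > (0:ℝ), ∃ η > (0:ℝ),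
      Tendsto (fun n : ℕ => ρ ^ n * (n : ℝ) ^ (2 + α + γ + η) * Fp (b n * θ / n))
        atTop (𝓝 0) ∧
      Tendsto (fun n : ℕ => ρ ^ n * (n : ℝ) * Fp (b n * θ / n)) atTop (𝓝 0) := by
  intro θ hθ
  have hρ0 : (0:ℝ) < ρ := lt_trans one_pos hρ
  -- exponents
  set m : ℝ := min α γ with hm
  have hm0 : 0 < m := lt_min hα hγ
  set σQ : ℝ := α - m / 4 with hσQ
  set σε : ℝ := γ / 2 with hσε
  set σ : ℝ := σε + σQ with hσ
  have hσQ0 : 0 < σQ := by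
    have : m ≤ α := min_le_left _ _
    simp only [hσQ]; linarith
  have hσQα : σQ < α := by simp only [hσQ]; linarith
  have hσε0 : 0 < σε := by simp only [hσε]; linarith
  have hσεγ : σε < γ := by simp only [hσε]; linarith
  have hσ0 : 0 < σ := by simp only [hσ]; linarith
  have hασ : α < σ := by
    have : m ≤ γ := min_le_right _ _
    simp only [hσ, hσε, hσQ]; linarith
  -- dyadic decay constants
  obtain ⟨Cε, hCε0, hCε⟩ := dyadic_decay eps γ ((2:ℝ) ^ (-σε)) heps_pos
    (rpow_pos_of_pos two_pos _)
    (rpow_lt_rpow_left_iff one_lt_two |>.2 (by linarith)) (hepsRV 2 two_pos)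
  obtain ⟨CQ, hCQ0, hCQ⟩ := dyadic_decay FQ α ((2:ℝ) ^ (-σQ)) (fun t _ => hFQ_pos t)
    (rpow_pos_of_pos two_pos _)
    (rpow_lt_rpow_left_iff one_lt_two |>.2 (by linarith)) (hFQRV 2 two_pos)
  -- the growth rate μ
  set e : ℝ := (1/σ + 1/α)/2 with he
  have he0 : 0 < e := by positivity
  clear_value m σQ σε σ e
  set μ : ℝ := ρ ^ e with hμdef
  have hμ1 : 1 < μ :=
    (Real.one_lt_rpow_iff_of_pos hρ0).2 (Or.inl ⟨hρ, he0⟩)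
  have hμ0 : 0 < μ := lt_trans one_pos hμ1
  have heα : e * α < 1 := by
    have h1 : e * α = (α/σ + 1)/2 := by rw [he]; field_simp
    have h2 : α/σ < 1 := (div_lt_one hσ0).2 hασ
    rw [h1]; linarith
  have heσ : 1 < e * σ := by
    have h1 : e * σ = (1 + σ/α)/2 := by rw [he]; field_simp
    have h2 : 1 < σ/α := (one_lt_div hα).2 hασ
    rw [h1]; linarith
  have hμα : μ ^ α < ρ := by
    rw [hμdef, ← Real.rpow_mul hρ0.le]
    calc ρ ^ (e * α) < ρ ^ (1:ℝ) := rpow_lt_rpow_of_exponent_lt hρ heα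
    _ = ρ := rpow_one ρ
  have hμσ : ρ < μ ^ σ := by
    rw [hμdef, ← Real.rpow_mul hρ0.le]
    calc ρ = ρ ^ (1:ℝ) := (rpow_one ρ).symm
    _ < ρ ^ (e * σ) := rpow_lt_rpow_of_exponent_lt hρ heσ
  obtain ⟨c, hc0, N₁, hc⟩ := b_growth FQ α ρ μ hα hρ hμ1 hμα hFQ_pos hFQ_anti hFQRV
    b hb_pos hb_mono hb_top hbn
  -- the geometric ratio q
  set q : ℝ := ρ * μ ^ (-σ) with hqdef
  have hμσ0 : (0:ℝ) < μ ^ σ := rpow_pos_of_pos hμ0 _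
  have hq0 : 0 < q := by
    have : (0:ℝ) < μ ^ (-σ) := rpow_pos_of_pos hμ0 _
    positivity
  have hq1 : q < 1 := by
    have hq' : q = ρ / μ ^ σ := by
      rw [hqdef, Real.rpow_neg hμ0.le]; ring
    rw [hq']; exact (div_lt_one hμσ0).2 hμσ
  set E : ℝ := 2 + α + γ + 1 with hE
  set kC : ℕ := ⌈E + σ⌉₊ with hkC
  set K : ℝ := Cε * CQ * 2 ^ σ * θ ^ (-σ) * c ^ (-σ) with hK
  have hK0 : 0 < K := by
    have h1 : (0:ℝ) < (2:ℝ) ^ σ := rpow_pos_of_pos two_pos _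
    have h2 : (0:ℝ) < θ ^ (-σ) := rpow_pos_of_pos hθ _
    have h3 : (0:ℝ) < c ^ (-σ) := rpow_pos_of_pos hc0 _
    positivity
  -- limit of the majorant
  have hg : Tendsto (fun n : ℕ => K * ((n:ℝ) ^ kC * q ^ n)) atTop (𝓝 0) := by
    have := (tendsto_pow_const_mul_const_pow_of_lt_one kC hq0.le hq1).const_mul K
    simpa using this
  -- eventually b n * θ / n ≥ 1
  have ev_x : ∀ᶠ n : ℕ in atTop, 1 ≤ b n * θ / n := by
    set ν : ℝ := Real.sqrt μ with hν
    have hν1 : 1 < ν := by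
      rw [hν]
      have : (1:ℝ) = Real.sqrt 1 := by simp
      rw [this]
      exact Real.sqrt_lt_sqrt zero_le_one hμ1
    have hν0 : 0 < ν := lt_trans one_pos hν1
    have hνν : ν * ν = μ := Real.mul_self_sqrt hμ0.le
    have ev_ν : ∀ᶠ n : ℕ in atTop, 1/(c * θ * (ν - 1)) ≤ ν ^ n :=
      (tendsto_pow_atTop_atTop_of_one_lt hν1).eventually_ge_atTop _
    have ev_b : ∀ᶠ n : ℕ in atTop, c * μ ^ n ≤ b n := eventually_atTop.2 ⟨N₁, hc⟩
    filter_upwards [ev_ν, ev_b, eventually_ge_atTop 1] with n hνn hbn' hn1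
    have hn0 : (0:ℝ) < n := by exact_mod_cast hn1
    rw [le_div_iff₀ hn0, one_mul]
    have h1 : (n:ℝ) * (ν - 1) ≤ ν ^ n := by
      have := one_add_mul_le_pow (by linarith : (-2:ℝ) ≤ ν - 1) n
      have h' : (1 + (ν - 1)) = ν := by ring
      rw [h'] at this; linarith
    have hcθν : (0:ℝ) < c * θ * (ν - 1) := by
      apply mul_pos (mul_pos hc0 hθ); linarith
    have h3 : (n:ℝ) * (ν - 1) * (1/(c * θ * (ν - 1))) ≤ ν ^ n * ν ^ n :=
      mul_le_mul h1 hνn (by positivity) (by positivity)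
    have h4 : (n:ℝ) * (ν - 1) * (1/(c * θ * (ν - 1))) = n / (c * θ) := by
      have hne : ν - 1 ≠ 0 := by linarith
      field_simp
    have h5 : (n:ℝ) ≤ c * θ * (ν ^ n * ν ^ n) := by
      rw [h4] at h3
      calc (n:ℝ) = n / (c * θ) * (c * θ) := by field_simp
      _ ≤ ν ^ n * ν ^ n * (c * θ) := mul_le_mul_of_nonneg_right h3 (by positivity)
      _ = c * θ * (ν ^ n * ν ^ n) := by ring
    have h6 : c * μ ^ n = c * (ν ^ n * ν ^ n) := by rw [← hνν, mul_pow]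
    calc (n:ℝ) ≤ c * θ * (ν ^ n * ν ^ n) := h5
    _ = c * (ν ^ n * ν ^ n) * θ := by ring
    _ = c * μ ^ n * θ := by rw [← h6]
    _ ≤ b n * θ := mul_le_mul_of_nonneg_right hbn' hθ.le
  -- the main eventual bound
  have ev_bound : ∀ᶠ n : ℕ in atTop,
      ρ ^ n * (n:ℝ) ^ E * Fp (b n * θ / n) ≤ K * ((n:ℝ) ^ kC * q ^ n) := by
    filter_upwards [ev_x, eventually_atTop.2 ⟨N₁, hc⟩, eventually_ge_atTop 1]
      with n hx1 hbn' hn1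
    have hn0 : (0:ℝ) < n := by exact_mod_cast hn1
    have hn1' : (1:ℝ) ≤ n := by exact_mod_cast hn1
    set x : ℝ := b n * θ / n with hxdef
    have hxpos : 0 < x := lt_of_lt_of_le one_pos hx1
    set k : ℕ := ⌊Real.logb 2 x⌋₊ with hkdef
    have hl0 : 0 ≤ Real.logb 2 x := Real.logb_nonneg one_lt_two hx1
    have hk_le : (2:ℝ) ^ k ≤ x := by
      calc (2:ℝ) ^ k = (2:ℝ) ^ ((k:ℕ):ℝ) := (rpow_natCast 2 k).symm
      _ ≤ (2:ℝ) ^ Real.logb 2 x :=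
          rpow_le_rpow_of_exponent_le one_le_two (Nat.floor_le hl0)
      _ = x := rpow_logb two_pos (by norm_num) hxpos
    have hx_lt : x < 2 * (2:ℝ) ^ k := by
      have h' : Real.logb 2 x < (k:ℝ) + 1 := Nat.lt_floor_add_one _
      calc x = (2:ℝ) ^ Real.logb 2 x := (rpow_logb two_pos (by norm_num) hxpos).symm
      _ < (2:ℝ) ^ ((k:ℝ) + 1) := rpow_lt_rpow_of_exponent_lt one_lt_two h'
      _ = 2 * (2:ℝ) ^ k := by
          rw [rpow_add two_pos, rpow_one, rpow_natCast]; ring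
    have h2k0 : (0:ℝ) < (2:ℝ) ^ k := by positivity
    -- bound Fp x
    have hss : (2:ℝ) ^ (-σε) * (2:ℝ) ^ (-σQ) = (2:ℝ) ^ (-σ) := by
      rw [← Real.rpow_add two_pos]; congr 1; simp only [hσ]; ring
    have hpow_id : ((2:ℝ) ^ (-σ)) ^ (k:ℕ) = ((2:ℝ) ^ (k:ℕ) : ℝ) ^ (-σ) := by
      rw [← Real.rpow_natCast ((2:ℝ) ^ (-σ)) k, ← Real.rpow_natCast (2:ℝ) k,
        ← Real.rpow_mul (by norm_num : (0:ℝ) ≤ 2),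
        ← Real.rpow_mul (by norm_num : (0:ℝ) ≤ 2)]
      congr 1; ring
    have hFp1 : Fp x ≤ Cε * CQ * (((2:ℝ) ^ k) ^ (-σ)) := by
      calc Fp x ≤ Fp ((2:ℝ) ^ k) := hFp_anti hk_le
      _ ≤ eps ((2:ℝ) ^ k) * FQ ((2:ℝ) ^ k) := hdom _ h2k0
      _ ≤ (Cε * ((2:ℝ) ^ (-σε)) ^ k) * (CQ * ((2:ℝ) ^ (-σQ)) ^ k) := by
          apply mul_le_mul (hCε k) (hCQ k) (hFQ_pos _).le
          have : (0:ℝ) < (2:ℝ) ^ (-σε) := rpow_pos_of_pos two_pos _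
          positivity
      _ = Cε * CQ * (((2:ℝ) ^ (-σε)) * ((2:ℝ) ^ (-σQ))) ^ k := by
          rw [mul_pow]; ring
      _ = Cε * CQ * (((2:ℝ) ^ k) ^ (-σ)) := by rw [hss, hpow_id]
    have hrp : (((2:ℝ) ^ k) ^ (-σ)) ≤ (x / 2) ^ (-σ) :=
      Real.rpow_le_rpow_of_nonpos (by positivity) (by linarith) (by linarith)
    have hx2 : (x / 2) ^ (-σ) = 2 ^ σ * x ^ (-σ) := by
      rw [Real.div_rpow hxpos.le (by norm_num : (0:ℝ) ≤ 2), div_eq_mul_inv,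
        Real.rpow_neg (by norm_num : (0:ℝ) ≤ 2), inv_inv]
      ring
    have hFp2 : Fp x ≤ Cε * CQ * 2 ^ σ * x ^ (-σ) := by
      calc Fp x ≤ Cε * CQ * (((2:ℝ) ^ k) ^ (-σ)) := hFp1
      _ ≤ Cε * CQ * ((x / 2) ^ (-σ)) := by
          exact mul_le_mul_of_nonneg_left hrp (by positivity)
      _ = Cε * CQ * 2 ^ σ * x ^ (-σ) := by rw [hx2]; ring
    -- decompose x ^ (-σ)
    have hxσ : x ^ (-σ) = (b n) ^ (-σ) * θ ^ (-σ) * (n:ℝ) ^ σ := by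
      rw [hxdef, Real.div_rpow (mul_pos (hb_pos n) hθ).le hn0.le,
        Real.mul_rpow (hb_pos n).le hθ.le, div_eq_mul_inv,
        Real.rpow_neg hn0.le, inv_inv]
    have hbσ : (b n) ^ (-σ) ≤ (c * μ ^ n) ^ (-σ) :=
      Real.rpow_le_rpow_of_nonpos (by positivity) hbn' (by linarith)
    have hμn_id : ((μ:ℝ) ^ (n:ℕ)) ^ (-σ) = (μ ^ (-σ)) ^ (n:ℕ) := by
      rw [← Real.rpow_natCast μ n, ← Real.rpow_natCast (μ ^ (-σ)) n,
        ← Real.rpow_mul hμ0.le, ← Real.rpow_mul hμ0.le]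
      congr 1; ring
    have hcb : (c * μ ^ n) ^ (-σ) = c ^ (-σ) * (μ ^ (-σ)) ^ n := by
      rw [Real.mul_rpow hc0.le (by positivity), hμn_id]
    -- exponent comparison
    have hnE : (n:ℝ) ^ E * (n:ℝ) ^ σ = (n:ℝ) ^ (E + σ) := (Real.rpow_add hn0 E σ).symm
    have hnkC : (n:ℝ) ^ (E + σ) ≤ (n:ℝ) ^ (kC:ℕ) := by
      calc (n:ℝ) ^ (E + σ) ≤ (n:ℝ) ^ ((kC:ℕ):ℝ) :=
          rpow_le_rpow_of_exponent_le hn1' (Nat.le_ceil _)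
      _ = (n:ℝ) ^ (kC:ℕ) := rpow_natCast _ _
    have hq_n : ρ ^ n * (μ ^ (-σ)) ^ n = q ^ n := by rw [hqdef, mul_pow]
    have hnE0 : (0:ℝ) ≤ (n:ℝ) ^ E := rpow_nonneg hn0.le _
    have hρn0 : (0:ℝ) < ρ ^ n := by positivity
    have hθσ0 : (0:ℝ) < θ ^ (-σ) := rpow_pos_of_pos hθ _
    have hcσ0 : (0:ℝ) < c ^ (-σ) := rpow_pos_of_pos hc0 _
    have h2σ0 : (0:ℝ) < (2:ℝ) ^ σ := rpow_pos_of_pos two_pos _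
    calc ρ ^ n * (n:ℝ) ^ E * Fp x
        ≤ ρ ^ n * (n:ℝ) ^ E * (Cε * CQ * 2 ^ σ * x ^ (-σ)) := by
          exact mul_le_mul_of_nonneg_left hFp2 (by positivity)
    _ = Cε * CQ * 2 ^ σ * θ ^ (-σ) * ((b n) ^ (-σ) * (ρ ^ n * ((n:ℝ) ^ E * (n:ℝ) ^ σ))) := by
          rw [hxσ]; ring
    _ ≤ Cε * CQ * 2 ^ σ * θ ^ (-σ) *
          ((c ^ (-σ) * (μ ^ (-σ)) ^ n) * (ρ ^ n * ((n:ℝ) ^ E * (n:ℝ) ^ σ))) := by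
          apply mul_le_mul_of_nonneg_left _ (by positivity)
          apply mul_le_mul_of_nonneg_right _ (by positivity)
          rw [← hcb]; exact hbσ
    _ = K * ((ρ ^ n * (μ ^ (-σ)) ^ n) * (n:ℝ) ^ (E + σ)) := by
          rw [← hnE, hK]; ring
    _ = K * (q ^ n * (n:ℝ) ^ (E + σ)) := by rw [hq_n]
    _ ≤ K * (q ^ n * (n:ℝ) ^ (kC:ℕ)) := by
          apply mul_le_mul_of_nonneg_left _ hK0.le
          exact mul_le_mul_of_nonneg_left hnkC (by positivity)
    _ = K * ((n:ℝ) ^ (kC:ℕ) * q ^ n) := by ring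
  -- conclude
  have ev_nonneg : ∀ᶠ n : ℕ in atTop, 0 ≤ ρ ^ n * (n:ℝ) ^ E * Fp (b n * θ / n) := by
    filter_upwards with n
    have h1 : (0:ℝ) ≤ (n:ℝ) ^ E := rpow_nonneg (Nat.cast_nonneg n) _
    have h2 := hFp_nonneg (b n * θ / n)
    positivity
  have main : Tendsto (fun n : ℕ => ρ ^ n * (n:ℝ) ^ E * Fp (b n * θ / n)) atTop (𝓝 0) :=
    squeeze_zero' ev_nonneg ev_bound hg
  refine ⟨1, one_pos, main, ?_⟩
  apply squeeze_zero' ?_ ?_ main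
  · filter_upwards with n
    have h2 := hFp_nonneg (b n * θ / n)
    positivity
  · filter_upwards [eventually_ge_atTop 1] with n hn1
    have hn1' : (1:ℝ) ≤ n := by exact_mod_cast hn1
    have hn0 : (0:ℝ) < n := by linarith
    have hEn : (n:ℝ) ≤ (n:ℝ) ^ E := by
      calc (n:ℝ) = (n:ℝ) ^ (1:ℝ) := (rpow_one _).symm
      _ ≤ (n:ℝ) ^ E := rpow_le_rpow_of_exponent_le hn1' (by simp only [hE]; linarith)
    have hρn0 : (0:ℝ) ≤ ρ ^ n := by positivity
    exact mul_le_mul_of_nonneg_right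
      (mul_le_mul_of_nonneg_left hEn hρn0) (hFp_nonneg _)


/-- if `ε` is regularly varying of index `-γ` (`γ > 0`), the tail
`F̄_Q` is regularly varying of index `-α` (`α > 0`), `P(|X^{(p)}| > x) = F̄_p(x) ≤
ε(x) F̄_Q(x)`, and `bₙ → ∞` satisfies `ρⁿ F̄_Q(bₙ) → 1` with `ρ > 1`, then for
every `θ > 0` there is `η > 0` with
`ρⁿ n^{2+α+γ+η} F̄_p(bₙθ/n) → 0`; in particular `ρⁿ · n · P(n|X^{(p)}| > bₙθ) → 0`. -/
theorem stmt12 (eps FQ Fp : ℝ → ℝ) (γ α ρ : ℝ)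
    (hγ : 0 < γ) (hα : 0 < α) (hρ : 1 < ρ)
    (heps_pos : ∀ t > (0:ℝ), 0 < eps t)
    (hFQ_pos : ∀ t, 0 < FQ t) (hFQ_anti : Antitone FQ)
    (hFp_nonneg : ∀ t, 0 ≤ Fp t) (hFp_anti : Antitone Fp)
    (hepsRV : ∀ x > (0:ℝ), Tendsto (fun t : ℝ => eps (t * x) / eps t) atTop (𝓝 (x ^ (-γ))))
    (hFQRV : ∀ x > (0:ℝ), Tendsto (fun t : ℝ => FQ (t * x) / FQ t) atTop (𝓝 (x ^ (-α))))
    (hdom : ∀ x > (0:ℝ), Fp x ≤ eps x * FQ x)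
    (b : ℕ → ℝ) (hb_pos : ∀ n, 0 < b n) (hb_mono : Monotone b)
    (hb_top : Tendsto b atTop atTop)
    (hbn : Tendsto (fun n : ℕ => ρ ^ n * FQ (b n)) atTop (𝓝 1)) :
    ∀ θ > (0:ℝ), ∃ η > (0:ℝ),
      Tendsto (fun n : ℕ => ρ ^ n * (n : ℝ) ^ (2 + α + γ + η) * Fp (b n * θ / n))
        atTop (𝓝 0) ∧
      Tendsto (fun n : ℕ => ρ ^ n * (n : ℝ) * Fp (b n * θ / n)) atTop (𝓝 0) :=
  stmt12' eps FQ Fp γ α ρ hγ hα hρ heps_pos hFQ_pos hFQ_anti hFp_nonneg hFp_anti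
    hepsRV hFQRV hdom b hb_pos hb_mono hb_top hbn
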